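/- Fix η > 0, R ≥ 0, T > 0 and ζ with ζ > η e^{RT}, and θ_r > 0. Define t₀ = T − (1/R) log[(ζ/η)(1 − 1/√(1+θ_r))] (assume R > 0 and (ζ/η)(1 − 1/√(1+θ_r)) > 1 so t₀ < T). Then for t ∈ [0, min(t₀,T)), the value u*(t) = 1 − (ζ/η)(1 − 1/√(1+θ_r)) e^{−R(T−t)} lies in (0,1) and satisfies (1+θ_r)(1/ζ) = ζ/(η(1−u*(t))e^{R(T−t)} − ζ)², i.e., the first-order condition (1+θ_r)E[Z] = E[Z e^{η(1−u)Z e^{R(T−t)}}] for Z ~ Exp(ζ). -/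
import Mathlib


open Real Set

/-- Expected value principle with exponential claims (formulas (4.13)–(4.14)):
for `t < t₀`, `u*(t) = 1 − (ζ/η)(1 − 1/√(1+θ_r)) e^{−R(T−t)}` lies in `(0,1)`
and satisfies the first-order condition
`(1+θ_r)/ζ = ζ/(η(1−u*)e^{R(T−t)} − ζ)²`. -/
theorem optimal_retention_expected_value_exponential
    (η R T θr ζ : ℝ)
    (hη : 0 < η) (hR : 0 < R) (hT : 0 < T) (hθ : 0 < θr)
    (hζ : ζ > η * exp (R * T))
    (hcoef : (ζ / η) * (1 - 1 / sqrt (1 + θr)) > 1) :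
    let t₀ := T - (1 / R) * log ((ζ / η) * (1 - 1 / sqrt (1 + θr)))
    ∀ t ∈ Ico (0:ℝ) (min t₀ T),
      let ustar := 1 - (ζ / η) * (1 - 1 / sqrt (1 + θr)) * exp (-R * (T - t))
      ustar ∈ Ioo (0:ℝ) 1 ∧
      (1 + θr) * (1 / ζ) = ζ / (η * (1 - ustar) * exp (R * (T - t)) - ζ) ^ 2 := by
  intro t₀ t ht ustar
  have hζ0 : 0 < ζ := lt_trans (by positivity) hζ
  have hsq : sqrt (1 + θr) ^ 2 = 1 + θr := sq_sqrt (by linarith)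
  have hs0 : 0 < sqrt (1 + θr) := sqrt_pos.mpr (by linarith)
  have hs1 : 1 < sqrt (1 + θr) := by nlinarith
  have hc0 : (0:ℝ) < (ζ / η) * (1 - 1 / sqrt (1 + θr)) := by linarith
  have ht0 : t < t₀ := lt_of_lt_of_le ht.2 (min_le_left _ _)
  have hlog : log ((ζ / η) * (1 - 1 / sqrt (1 + θr))) < R * (T - t) := by
    have h : (1 / R) * log ((ζ / η) * (1 - 1 / sqrt (1 + θr))) < T - t := by
      simp only [t₀] at ht0; linarith
    calc log ((ζ / η) * (1 - 1 / sqrt (1 + θr)))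
        = R * ((1 / R) * log ((ζ / η) * (1 - 1 / sqrt (1 + θr)))) := by field_simp
    _ < R * (T - t) := (mul_lt_mul_iff_right₀ hR).mpr h
  have hce : (ζ / η) * (1 - 1 / sqrt (1 + θr)) < exp (R * (T - t)) := by
    calc (ζ / η) * (1 - 1 / sqrt (1 + θr))
        = exp (log ((ζ / η) * (1 - 1 / sqrt (1 + θr)))) := (exp_log hc0).symm
    _ < exp (R * (T - t)) := exp_lt_exp.mpr hlog
  have hinv : exp (-R * (T - t)) = (exp (R * (T - t)))⁻¹ := by
    rw [← exp_neg]; ring_nf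
  have hepos : 0 < exp (R * (T - t)) := exp_pos _
  have hu1 : ustar < 1 := by
    have h0 : 0 < (ζ / η) * (1 - 1 / sqrt (1 + θr)) * exp (-R * (T - t)) :=
      mul_pos hc0 (exp_pos _)
    simp only [ustar]; linarith
  have hu0 : 0 < ustar := by
    have h1 : (ζ / η) * (1 - 1 / sqrt (1 + θr)) * exp (-R * (T - t)) < 1 := by
      rw [hinv, mul_inv_lt_iff₀' hepos]; linarith
    simp only [ustar]; linarith
  refine ⟨⟨hu0, hu1⟩, ?_⟩
  have hkey : η * (1 - ustar) * exp (R * (T - t)) = ζ * (1 - 1 / sqrt (1 + θr)) := by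
    simp only [ustar, hinv]
    field_simp
    ring
  rw [hkey]
  have hden : ζ * (1 - 1 / sqrt (1 + θr)) - ζ = -ζ / sqrt (1 + θr) := by
    field_simp
    ring
  rw [hden, div_pow, neg_pow]
  field_simp
  nlinarith [hsq, hζ0, hs0]
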